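/- Let A, B be reduced groups with action on themselves, and suppose B acts on A by a triple satisfying the derived-action conditions of groups with action together with the reduced conditions: b·(a^{a'}) = a^{a'}, b·(a^{b'}) = a^{b'}, (b^{b'})·a = a, b^{(a^{a'})} = b^a, a^{(b^{b'})} = a^b, a^b + a' = a' + a^b, a^{(a'^b)} = a^{a'}, a^{(b^{a'})} = a, b^{(b'^a)} = 0, and b^{(a^{b'})} = b^a. Then the semi-direct product B ⋉ A, with (b,a)+(b',a') = (b+b', a+b·a') and (b,a)^{(b',a')} = (b^{b'}, (a^{a'})^{b'} + (b^{a'})^{b'}), is a reduced group with action on itself; in particular (b,a)^{(b',a')} + (b'',a'') = (b'',a'') + (b,a)^{(b',a')} whenever (b',a') ≠ (0,0), and (b,a)^{((b',a')^{(b'',a'')})} = (b,a)^{(b',a')}. -/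
import Mathlib


/-- A group with action on itself: a (not necessarily abelian) additive group `G`
with a map `act g h = g^h` satisfying `g^(h+h') = (g^h)^{h'}`, `g^0 = g`,
`(g+g')^h = g^h + g'^h`. -/
class Gwa (G : Type*) extends AddGroup G where
  act : G → G → G
  act_add : ∀ g h h' : G, act g (h + h') = act (act g h) h'
  act_zero : ∀ g : G, act g 0 = g
  add_act : ∀ g g' h : G, act (g + g') h = act g h + act g' h

open Gwa

/-- Morphisms of groups with action on themselves. -/
def IsGwaHom {G H : Type*} [Gwa G] [Gwa H] (f : G → H) : Prop :=
  (∀ a b : G, f (a + b) = f a + f b) ∧ ∀ a b : G, f (act a b) = act (f a) (f b)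

/-- A "group with action on itself" structure given by explicit operations. -/
structure GwaStruct (G : Type*) where
  add : G → G → G
  zero : G
  neg : G → G
  act : G → G → G
  add_assoc : ∀ a b c : G, add (add a b) c = add a (add b c)
  zero_add : ∀ a : G, add zero a = a
  add_zero : ∀ a : G, add a zero = a
  neg_add : ∀ a : G, add (neg a) a = zero
  act_add : ∀ g h h' : G, act g (add h h') = act (act g h) h'
  act_zero : ∀ g : G, act g zero = g
  add_act : ∀ g g' h : G, act (add g g') h = add (act g h) (act g' h)

/-- A reduced group with action on itself. -/
class RGwa (G : Type*) extends Gwa G where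
  act_comm : ∀ x y z : G, y ≠ 0 → act x y + z = z + act x y
  act_act : ∀ x y z : G, act x (act y z) = act x y

lemma rgwa_add_comm {G : Type*} [RGwa G] (x y : G) : x + y = y + x := by
  by_cases h : ∀ z : G, z = 0
  · rw [h x, h y]
  · push_neg at h
    obtain ⟨w, hw⟩ := h
    have hx : x = act (act x w) (-w) := by
      rw [← Gwa.act_add, add_neg_cancel, Gwa.act_zero]
    rw [hx]
    exact RGwa.act_comm (act x w) (-w) y (neg_ne_zero.mpr hw)

theorem reduced_semidirect_is_rgwa {A B : Type*} [RGwa A] [RGwa B]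
        (dot : B → A → A) (astB : B → A → A) (actA : A → B → A)
    (hdot1 : ∀ (b : B) (a a' : A), dot b (a + a') = dot b a + dot b a')
    (hdot2 : ∀ (b b' : B) (a : A), dot (b + b') a = dot b (dot b' a))
    (hdot3 : ∀ a : A, dot 0 a = a)
    (h1A : ∀ (a a' : A) (b : B), actA (a + a') b = actA a b + actA a' b)
    (h2A : ∀ (b b' : B) (a : A), astB (b + b') a = astB b a + dot b (astB b' a))
    (h3A : ∀ (b : B) (a a' : A), act (dot b a) a' + astB b a' = astB b a' + dot b (act a a'))
    (h4A : ∀ (b b' : B) (a : A), actA (dot b a) b' = dot (act b b') (actA a b'))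
    (h1B : ∀ (b : B) (a a' : A), astB b (a + a') = act (astB b a) a' + astB b a')
    (h2B : ∀ (a : A) (b b' : B), actA a (b + b') = actA (actA a b) b')
    (h3B : ∀ (a a' : A) (b : B), actA (act a (dot b a')) b = act (actA a b) a')
    (h4B : ∀ (b b' : B) (a : A), actA (astB b (dot b' a)) b' = astB (act b b') a)
    (h0 : ∀ a : A, actA a 0 = a)
    (r1 : ∀ (b : B) (a a' : A), dot b (act a a') = act a a')
    (r2 : ∀ (b b' : B) (a : A), dot b (actA a b') = actA a b')
    (r3 : ∀ (b b' : B) (a : A), dot (act b b') a = a)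
    (r4 : ∀ (b : B) (a a' : A), astB b (act a a') = astB b a)
    (r5 : ∀ (a : A) (b b' : B), actA a (act b b') = actA a b)
    (r6 : ∀ (a a' : A) (b : B), actA a b + a' = a' + actA a b)
    (r7 : ∀ (a a' : A) (b : B), act a (actA a' b) = act a a')
    (r8 : ∀ (a a' : A) (b : B), act a (astB b a') = a)
    (r9 : ∀ (b b' : B) (a : A), astB b (astB b' a) = 0)
    (r10 : ∀ (b b' : B) (a : A), astB b (actA a b') = astB b a) :
    ∃ s : GwaStruct (B × A),
      (∀ p q : B × A, s.add p q = (p.1 + q.1, p.2 + dot p.1 q.2)) ∧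
      s.zero = (0, 0) ∧
      (∀ p q : B × A,
        s.act p q = (act p.1 q.1, actA (act p.2 q.2) q.1 + actA (astB p.1 q.2) q.1)) ∧
      (∀ p q r : B × A, q ≠ s.zero → s.add (s.act p q) r = s.add r (s.act p q)) ∧
      (∀ p q r : B × A, s.act p (s.act q r) = s.act p q)     := by
  -- Every reduced group with action on itself is abelian.
  have commA : ∀ x y : A, x + y = y + x := rgwa_add_comm
  have commB : ∀ x y : B, x + y = y + x := rgwa_add_comm
  have mixA : ∀ x y z w : A, (x + y) + (z + w) = (x + z) + (y + w) := by
    intro x y z w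
    rw [add_assoc, add_assoc, ← add_assoc y z w, commA y z, add_assoc]
  have dot0 : ∀ b : B, dot b (0 : A) = 0 := by
    intro b
    have h := hdot1 b 0 0
    rw [add_zero] at h
    exact (left_eq_add.mp h)
  have astB0 : ∀ b : B, astB b (0 : A) = 0 := by
    intro b
    have h := h1B b 0 0
    rw [add_zero, Gwa.act_zero] at h
    exact (left_eq_add.mp h)
  have actA_dot : ∀ (b : B) (w : A) (c : B), actA (dot b w) c = actA w c := by
    intro b w c
    rw [h4A, r3]
  have dotact : ∀ (b : B) (a' x : A), act (dot b a') x = act a' x := by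
    intro b a' x
    have h := h3A b a' x
    rw [r1] at h
    rw [commA (astB b x) (act a' x)] at h
    exact add_right_cancel h
  refine ⟨{
    add := fun p q => (p.1 + q.1, p.2 + dot p.1 q.2)
    zero := (0, 0)
    neg := fun p => (-p.1, dot (-p.1) (-p.2))
    act := fun p q => (act p.1 q.1, actA (act p.2 q.2) q.1 + actA (astB p.1 q.2) q.1)
    add_assoc := by
      intro p q r
      simp only [Prod.mk.injEq]
      constructor
      · exact add_assoc _ _ _
      · rw [hdot1, hdot2, add_assoc]
    zero_add := by
      intro p
      simp [hdot3]
    add_zero := by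
      intro p
      simp [dot0]
    neg_add := by
      intro p
      simp [← hdot1, dot0]
    act_add := by
      intro p q r
      simp only [Prod.mk.injEq]
      refine ⟨Gwa.act_add _ _ _, ?_⟩
      rw [Gwa.act_add, h2B, h3B, h1B, h1A, h2B, h3B, h2B, h4B, Gwa.add_act, h1A,
        add_assoc]
    act_zero := by
      intro p
      simp [Gwa.act_zero, astB0, h0]
    add_act := by
      intro p q r
      simp only [Prod.mk.injEq]
      refine ⟨Gwa.add_act _ _ _, ?_⟩
      rw [Gwa.add_act, dotact, h2A, h1A, h1A, actA_dot, r3, mixA]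
  }, fun p q => rfl, rfl, fun p q => rfl, ?_, ?_⟩
  · -- act_comm
    intro p q r _
    simp only [Prod.mk.injEq]
    refine ⟨commB _ _, ?_⟩
    rw [r3, hdot1, r2, r2, commA]
  · -- act_act
    intro p q r
    simp only [Prod.mk.injEq]
    refine ⟨RGwa.act_act _ _ _, ?_⟩
    simp only [r4, r5, r7, r8, r9, r10, h1B, Gwa.act_add, RGwa.act_act, add_zero]
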